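/- In the above Markov chain on 2m letters, for each n ≥ 0 the conditional distribution of x_n given x_0 = y takes only the two values 𝔪·s_{n-1} (attained at x = y if n is even, at x = y^{-1} if n is odd) and 𝔪·s_n (attained at all other letters), where 𝔪 = 1/(2m-1) and s_n = ∑_{k=0}^{n-1}(-𝔪)^k. -/

import Mathlib

/-- The inverse of a letter. -/
def letterInv {m : ℕ} (x : Fin m × Bool) : Fin m × Bool := (x.1, !x.2)

/-- Transition matrix of the Markov chain on the `2m` letters where from state `y`
the next state is uniform over the `2m - 1` letters different from `y⁻¹`. -/
noncomputable def letterTransition (m : ℕ) : Matrix (Fin m × Bool) (Fin m × Bool) ℝ :=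
  fun y x => if x = letterInv y then 0 else 1 / (2 * m - 1)

lemma letterInv_invol {m : ℕ} (x : Fin m × Bool) : letterInv (letterInv x) = x := by
  simp [letterInv]

theorem stmt_4 (m : ℕ) (hm : 2 ≤ m)
    (𝔪 : ℝ) (h𝔪 : 𝔪 = 1 / (2 * m - 1))
    (s : ℕ → ℝ) (hs : ∀ n, s n = ∑ k ∈ Finset.range n, (-𝔪) ^ k)
    (n : ℕ) (hn : 1 ≤ n) (x y : Fin m × Bool) :
    (letterTransition m ^ n) y x =
      if x = (if Even n then y else letterInv y) then 𝔪 * s (n - 1) else 𝔪 * s n := by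
  have hm1 : (2 * (m:ℝ) - 1) ≠ 0 := by
    have : (2:ℝ) ≤ m := by exact_mod_cast hm
    nlinarith
  have h𝔪1 : 𝔪 * (2 * (m:ℝ) - 1) = 1 := by
    rw [h𝔪]; field_simp
  have hrec : ∀ j, s (j + 1) = 1 - 𝔪 * s j := by
    intro j
    rw [hs, hs, Finset.sum_range_succ']
    simp only [pow_succ']
    rw [← Finset.mul_sum]
    ring
  induction n, hn using Nat.le_induction generalizing x y with
  | base =>
    have h0 : s 0 = 0 := by simp [hs]
    have h1 : s 1 = 1 := by simp [hs]
    rw [pow_one]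
    simp only [letterTransition, h0, h1, Nat.sub_self, mul_zero, mul_one, h𝔪,
      if_neg (by decide : ¬ Even 1)]
  | succ n hn ih =>
    set z₀ : Fin m × Bool := if Even n then x else letterInv x with hz₀
    set a := 𝔪 * s (n - 1) with ha
    set b := 𝔪 * s n with hb
    have hIH : ∀ z, (letterTransition m ^ n) z x = if z = z₀ then a else b := by
      intro z
      rw [ih x z]
      have hcond : (x = (if Even n then z else letterInv z)) ↔ (z = z₀) := by
        by_cases he : Even n
        · simp [hz₀, he, eq_comm]
        · simp only [hz₀, he, if_false]
          constructor
          · rintro rfl; exact (letterInv_invol z).symm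
          · rintro rfl; exact (letterInv_invol x).symm
      rw [if_congr hcond rfl rfl]
    rw [pow_succ', Matrix.mul_apply]
    simp only [hIH, letterTransition]
    have hterm : ∀ z : Fin m × Bool,
        (if z = letterInv y then (0:ℝ) else 1 / (2 * m - 1)) * (if z = z₀ then a else b)
        = 𝔪 * b + (if z = z₀ then 𝔪 * (a - b) else 0)
          - (if z = letterInv y then 𝔪 * (if z = z₀ then a else b) else 0) := by
      intro z
      rw [← h𝔪]
      split_ifs <;> ring
    rw [Finset.sum_congr rfl (fun z _ => hterm z)]
    rw [Finset.sum_sub_distrib, Finset.sum_add_distrib, Finset.sum_const,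
      Finset.sum_ite_eq' Finset.univ z₀ (fun _ => 𝔪 * (a - b)),
      Finset.sum_ite_eq' Finset.univ (letterInv y)
        (fun z => 𝔪 * (if z = z₀ then a else b))]
    simp only [Finset.mem_univ, if_true, Finset.card_univ, Fintype.card_prod,
      Fintype.card_fin, Fintype.card_bool]
    obtain ⟨k, rfl⟩ : ∃ k, n = k + 1 := ⟨n - 1, (Nat.succ_pred_eq_of_pos hn).symm⟩
    have e1 : s (k + 1) = 1 - 𝔪 * s k := hrec k
    have e2 : s (k + 2) = 1 - 𝔪 * s (k + 1) := hrec (k + 1)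
    by_cases hx : x = (if Even (k + 1 + 1) then y else letterInv y)
    · have hzy : letterInv y = z₀ := by
        rw [hz₀]
        rcases Nat.even_or_odd (k + 1) with he | ho
        · have : ¬ Even (k + 1 + 1) := by simpa [Nat.even_add_one] using he
          rw [if_neg this] at hx
          simp [he, hx, letterInv_invol]
        · have h2 : Even (k + 1 + 1) := Nat.even_add_one.mpr (Nat.not_even_iff_odd.mpr ho)
          rw [if_pos h2] at hx
          rw [if_neg (Nat.not_even_iff_odd.mpr ho), hx]
      rw [if_pos hx, if_pos hzy]
      simp only [ha, hb, Nat.add_sub_cancel, nsmul_eq_mul]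
      push_cast
      linear_combination (𝔪 * s (k + 1)) * h𝔪1
    · have hzy : letterInv y ≠ z₀ := by
        intro h
        apply hx
        rw [hz₀] at h
        rcases Nat.even_or_odd (k + 1) with he | ho
        · have h2 : ¬ Even (k + 1 + 1) := by simpa [Nat.even_add_one] using he
          rw [if_neg h2]
          rw [if_pos he] at h
          exact h.symm
        · have h2 : Even (k + 1 + 1) := Nat.even_add_one.mpr (Nat.not_even_iff_odd.mpr ho)
          rw [if_pos h2]
          rw [if_neg (Nat.not_even_iff_odd.mpr ho)] at h
          have := congrArg letterInv h
          rw [letterInv_invol, letterInv_invol] at this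
          exact this.symm
      rw [if_neg hx, if_neg hzy]
      simp only [Nat.add_sub_cancel, ha, hb, nsmul_eq_mul]
      push_cast
      linear_combination 𝔪 * e1 - 𝔪 * e2 + (𝔪 * s (k + 1)) * h𝔪1
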